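/- Let P be a connected finite Γ-colored d-complete poset and suppose there exists b ∈ Γ with L_b(P) > 2. Then P is not an order filter of any Γ-colored minuscule poset; i.e., there is no Γ-colored minuscule poset Q (with coloring κ_Q : Q → Γ) such that P is an order filter of Q and κ_Q restricted to P equals κ. -/

import Mathlib

/-!
Common definitions: Dynkin diagram data, Γ-colored posets, and the coloring
properties EC, NA, AC, ICE2, UCB1, LCB1 from the paper, together with
Γ-colored d-complete and Γ-colored minuscule posets, top trees, slant
irreducibility, extensions, lower frontier censuses, and full heaps.
-/

universe u v w

variable {Γ : Type u} {P : Type v}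

/-- The integers `θ a b` form a Dynkin diagram datum. -/
def DynkinDatum (θ : Γ → Γ → ℤ) : Prop :=
  (∀ a : Γ, θ a a = 2) ∧ (∀ a b : Γ, a ≠ b → θ a b ≤ 0) ∧
    (∀ a b : Γ, a ≠ b → (θ a b = 0 ↔ θ b a = 0))

/-- Colors `a` and `b` are adjacent. -/
def AdjColor (θ : Γ → Γ → ℤ) (a b : Γ) : Prop := θ a b < 0

/-- The Dynkin diagram is simply laced. -/
def SimplyLaced (θ : Γ → Γ → ℤ) : Prop :=
  ∀ a b : Γ, a ≠ b → θ a b = 0 ∨ θ a b = -1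

/-- All closed intervals are finite. -/
def LocallyFinitePoset (α : Type*) [PartialOrder α] : Prop :=
  ∀ x y : α, (Set.Icc x y).Finite

/-- A poset is connected if it cannot be written as a disjoint union of two nonempty
subposets with no comparabilities between them. -/
def ConnectedPoset (α : Type*) [PartialOrder α] : Prop :=
  ∀ S : Set α, S.Nonempty → Sᶜ.Nonempty → ∃ x ∈ S, ∃ y ∈ Sᶜ, x ≤ y ∨ y ≤ x

section
variable [PartialOrder P]

/-- (EC) Elements with equal colors are comparable. -/
def ColoredEC (κ : P → Γ) : Prop := ∀ x y : P, κ x = κ y → x ≤ y ∨ y ≤ x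

/-- (NA) Neighbors have adjacent colors. -/
def ColoredNA (θ : Γ → Γ → ℤ) (κ : P → Γ) : Prop :=
  ∀ x y : P, x ⋖ y → AdjColor θ (κ x) (κ y)

/-- (AC) Elements with adjacent colors are comparable. -/
def ColoredAC (θ : Γ → Γ → ℤ) (κ : P → Γ) : Prop :=
  ∀ x y : P, AdjColor θ (κ x) (κ y) → x ≤ y ∨ y ≤ x

/-- (ICE2) Between consecutive elements of a color `a`, the census of colors
adjacent to `a` is two. -/
def ColoredICE2 (θ : Γ → Γ → ℤ) (κ : P → Γ) : Prop :=
  ∀ (a : Γ) (x y : P), κ x = a → κ y = a → x < y → (∀ z ∈ Set.Ioo x y, κ z ≠ a) →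
    (∑ᶠ z ∈ Set.Ioo x y, -θ (κ z) a) = 2

/-- `U(x,P)`: elements above `x` with color adjacent to that of `x`. -/
def USet (θ : Γ → Γ → ℤ) (κ : P → Γ) (x : P) : Set P :=
  {y : P | x < y ∧ AdjColor θ (κ y) (κ x)}

/-- `L(x,P)`: elements below `x` with color adjacent to that of `x`. -/
def LSet (θ : Γ → Γ → ℤ) (κ : P → Γ) (x : P) : Set P :=
  {y : P | y < x ∧ AdjColor θ (κ y) (κ x)}

/-- (UCB1) Upper frontier census bound. -/
def ColoredUCB1 (θ : Γ → Γ → ℤ) (κ : P → Γ) : Prop :=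
  ∀ x : P, (∀ y : P, κ y = κ x → ¬x < y) →
    (USet θ κ x).Finite ∧ (∑ᶠ y ∈ USet θ κ x, -θ (κ y) (κ x)) ≤ 1

/-- (LCB1) Lower frontier census bound. -/
def ColoredLCB1 (θ : Γ → Γ → ℤ) (κ : P → Γ) : Prop :=
  ∀ x : P, (∀ y : P, κ y = κ x → ¬y < x) →
    (LSet θ κ x).Finite ∧ (∑ᶠ y ∈ LSet θ κ x, -θ (κ y) (κ x)) ≤ 1

/-- A Γ-colored d-complete poset: locally finite, surjectively colored, and
satisfying EC, NA, AC, ICE2, and UCB1. -/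
def GColoredDComplete (θ : Γ → Γ → ℤ) (κ : P → Γ) : Prop :=
  LocallyFinitePoset P ∧ Function.Surjective κ ∧ ColoredEC κ ∧ ColoredNA θ κ ∧
    ColoredAC θ κ ∧ ColoredICE2 θ κ ∧ ColoredUCB1 θ κ

/-- A Γ-colored minuscule poset: Γ-colored d-complete and LCB1. -/
def GColoredMinuscule (θ : Γ → Γ → ℤ) (κ : P → Γ) : Prop :=
  GColoredDComplete θ κ ∧ ColoredLCB1 θ κ

/-- The top tree: the set of elements maximal in their color class. -/
def TopTree (κ : P → Γ) : Set P := {x : P | ∀ y : P, κ y = κ x → ¬x < y}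

/-- `x` is covered by `y` within the subposet `S`. -/
def CoversIn (S : Set P) (x y : P) : Prop :=
  x ∈ S ∧ y ∈ S ∧ x < y ∧ ∀ z ∈ S, x < z → ¬z < y

/-- Slant irreducibility of a Γ-colored d-complete poset. -/
def SlantIrreducible (κ : P → Γ) : Prop :=
  ConnectedPoset P ∧ ∀ x y : P, CoversIn (TopTree κ) x y → ∃ z : P, z ≠ y ∧ κ z = κ y

/-- A saturated chain in a subposet `S`: a chain that is convex in `S`. -/
def SaturatedChainIn (S C : Set P) : Prop :=
  C ⊆ S ∧ IsChain (· ≤ ·) C ∧ ∀ x ∈ C, ∀ y ∈ C, ∀ z ∈ S, x < z → z < y → z ∈ C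

/-- The lower frontier census at the element `y`. -/
noncomputable def LCensus (θ : Γ → Γ → ℤ) (κ : P → Γ) (y : P) : ℤ :=
  ∑ᶠ x ∈ LSet θ κ y, -θ (κ x) (κ y)

/-- A full heap: locally finite, surjectively colored, EC, NA, AC, ICE2, and every
color class order-isomorphic to ℤ. -/
def FullHeap (θ : Γ → Γ → ℤ) (κ : P → Γ) : Prop :=
  LocallyFinitePoset P ∧ Function.Surjective κ ∧ ColoredEC κ ∧ ColoredNA θ κ ∧
    ColoredAC θ κ ∧ ColoredICE2 θ κ ∧ ∀ a : Γ, Nonempty ({x : P // κ x = a} ≃o ℤ)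

end

/-- `ι` realizes the colored poset `A` as an order filter of the colored poset `B`. -/
def FilterEmbedding {G : Type*} {A B : Type*} [PartialOrder A] [PartialOrder B]
    (κ : A → G) (κ' : B → G) (ι : A → B) : Prop :=
  (∀ p q : A, ι p ≤ ι q ↔ p ≤ q) ∧ (∀ p : A, κ' (ι p) = κ p) ∧ IsUpperSet (Set.range ι)

/-- `B` is an extension of `A` by the color `a`, with extending element `x`. -/
def IsExtensionBy {G : Type*} {A B : Type*} [PartialOrder A] [PartialOrder B]
    (θ : G → G → ℤ) (κ : A → G) (κ' : B → G) (a : G) (ι : A → B) (x : B) : Prop :=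
  Finite B ∧ GColoredDComplete θ κ' ∧ ConnectedPoset B ∧
    FilterEmbedding κ κ' ι ∧ (Set.range ι)ᶜ = {x} ∧ κ' x = a

lemma finsum_mem_le_of_subset {α : Type*} {S T : Set α} (hT : T.Finite) (hST : S ⊆ T)
    (f : α → ℤ) (hf : ∀ x ∈ T, 0 ≤ f x) :
    (∑ᶠ x ∈ S, f x) ≤ ∑ᶠ x ∈ T, f x := by
  have hS : S.Finite := hT.subset hST
  rw [← Set.Finite.coe_toFinset hS, ← Set.Finite.coe_toFinset hT,
    finsum_mem_coe_finset, finsum_mem_coe_finset]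
  apply Finset.sum_le_sum_of_subset_of_nonneg
  · intro x hx
    simp only [Set.Finite.mem_toFinset] at hx ⊢
    exact hST hx
  · intro x hx _
    exact hf x (hT.mem_toFinset.mp hx)

/-- A connected finite Γ-colored d-complete poset with some lower
frontier census exceeding 2 is not an order filter of any Γ-colored minuscule poset. -/
theorem census_gt_two_not_filter [Fintype Γ] [PartialOrder P] [Fintype P] [Nonempty P]
    (θ : Γ → Γ → ℤ) (κ : P → Γ) (hθ : DynkinDatum θ)
    (hdc : GColoredDComplete θ κ) (hconn : ConnectedPoset P)
    (b : Γ) (y : P) (hy : κ y = b) (hymin : ∀ z : P, κ z = b → y ≤ z)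
    (hL : 2 < LCensus θ κ y) :
    ¬∃ (Q : Type w) (instQ : PartialOrder Q) (κQ : Q → Γ) (ι : P → Q),
        @GColoredMinuscule Γ Q instQ θ κQ ∧
          @FilterEmbedding Γ P Q inferInstance instQ κ κQ ι := by
  rintro ⟨Q, instQ, κQ, ι, ⟨⟨hlfQ, hsurjQ, hECQ, hNAQ, hACQ, hICE2Q, hUCB1Q⟩, hLCB1Q⟩,
    hord, hcol, hupper⟩
  obtain ⟨ha2, hneg, hzero⟩ := hθ
  have hinj : Function.Injective ι := by
    intro p q h
    exact le_antisymm ((hord p q).mp h.le) ((hord q p).mp h.ge)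
  have hcolιy : κQ (ι y) = b := by rw [hcol, hy]
  -- no element of color b strictly below ι y lies in the range of ι
  have hnr : ∀ q : Q, q < ι y → κQ q = b → q ∉ Set.range ι := by
    rintro q hq hqb ⟨w, rfl⟩
    have hwy : w ≤ y := (hord w y).mp hq.le
    have hwb : κ w = b := by rw [← hcol w, hqb]
    have : y ≤ w := hymin w hwb
    exact hq.ne (by rw [le_antisymm hwy this])
  -- the image of LSet θ κ y under ι, with facts about it
  set f : Q → ℤ := fun q => -θ (κQ q) b with hf
  have hLC : LCensus θ κ y = ∑ᶠ q ∈ ι '' LSet θ κ y, f q := by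
    rw [finsum_mem_image (hinj.injOn)]
    unfold LCensus
    apply finsum_mem_congr rfl
    intro x _
    rw [hf]
    simp [hcol x, hy]
  have himgmem : ∀ x ∈ LSet θ κ y, ι x < ι y ∧ AdjColor θ (κQ (ι x)) b := by
    rintro x ⟨hxy, hadj⟩
    refine ⟨lt_of_le_of_ne ((hord x y).mpr hxy.le) (fun h => hxy.ne (hinj h)), ?_⟩
    rw [hcol x, ← hy]
    exact hadj
  by_cases hmin : ∀ q : Q, κQ q = κQ (ι y) → ¬ q < ι y
  · -- ι y is minimal of its color in Q; use LCB1
    obtain ⟨hfinL, hsum⟩ := hLCB1Q (ι y) hmin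
    have hsub : ι '' LSet θ κ y ⊆ LSet θ κQ (ι y) := by
      rintro q ⟨x, hx, rfl⟩
      obtain ⟨h1, h2⟩ := himgmem x hx
      exact ⟨h1, by rwa [hcolιy]⟩
    have hnn : ∀ q ∈ LSet θ κQ (ι y), 0 ≤ f q := by
      rintro q ⟨_, hadj⟩
      rw [hcolιy] at hadj
      simp only [hf, neg_nonneg]
      exact hadj.le
    have hle : (∑ᶠ q ∈ ι '' LSet θ κ y, f q) ≤ ∑ᶠ q ∈ LSet θ κQ (ι y), f q :=
      finsum_mem_le_of_subset hfinL hsub f hnn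
    have heq : (∑ᶠ q ∈ LSet θ κQ (ι y), f q) = ∑ᶠ q ∈ LSet θ κQ (ι y), -θ (κQ q) (κQ (ι y)) := by
      apply finsum_mem_congr rfl
      intro q _
      rw [hf, hcolιy]
    rw [hLC] at hL
    omega
  · -- there is an element of color b below ι y; find the greatest one and use ICE2
    push_neg at hmin
    obtain ⟨z, hzb, hz⟩ := hmin
    rw [hcolιy] at hzb
    have hSfin : {w : Q | w ∈ Set.Icc z (ι y) ∧ κQ w = b ∧ w < ι y}.Finite :=
      (hlfQ z (ι y)).subset (fun w hw => hw.1)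
    have hSne : {w : Q | w ∈ Set.Icc z (ι y) ∧ κQ w = b ∧ w < ι y}.Nonempty :=
      ⟨z, ⟨le_refl z, hz.le⟩, hzb, hz⟩
    obtain ⟨z', hz'S, hz'max⟩ := Set.Finite.exists_maximalFor id _ hSfin hSne
    obtain ⟨⟨hzz', _⟩, hz'b, hz'lt⟩ := hz'S
    -- z' and ι y are consecutive of color b
    have hcons : ∀ w ∈ Set.Ioo z' (ι y), κQ w ≠ b := by
      rintro w ⟨hw1, hw2⟩ hwb
      have hwS : w ∈ {w : Q | w ∈ Set.Icc z (ι y) ∧ κQ w = b ∧ w < ι y} :=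
        ⟨⟨le_trans hzz' hw1.le, hw2.le⟩, hwb, hw2⟩
      have := hz'max hwS hw1.le
      simp only [id_eq] at this
      exact absurd this (not_le_of_gt hw1)
    have hICE := hICE2Q b z' (ι y) hz'b hcolιy hz'lt hcons
    -- image of LSet lies in the open interval
    have hsub : ι '' LSet θ κ y ⊆ Set.Ioo z' (ι y) := by
      rintro q ⟨x, hx, rfl⟩
      obtain ⟨h1, h2⟩ := himgmem x hx
      refine ⟨?_, h1⟩
      have hadj' : AdjColor θ (κQ (ι x)) (κQ z') := by rwa [hz'b]
      have hxb : κQ (ι x) ≠ b := by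
        intro h
        rw [h] at h2
        unfold AdjColor at h2
        rw [ha2 b] at h2
        omega
      rcases hACQ (ι x) z' hadj' with h | h
      · exact absurd (hupper h ⟨x, rfl⟩) (hnr z' hz'lt hz'b)
      · exact lt_of_le_of_ne h (fun he => hxb (he ▸ hz'b))
    have hIoofin : (Set.Ioo z' (ι y)).Finite :=
      (hlfQ z' (ι y)).subset Set.Ioo_subset_Icc_self
    have hnn : ∀ q ∈ Set.Ioo z' (ι y), 0 ≤ f q := by
      intro q hq
      simp only [hf, neg_nonneg]
      exact hneg (κQ q) b (hcons q hq)
    have hle : (∑ᶠ q ∈ ι '' LSet θ κ y, f q) ≤ ∑ᶠ q ∈ Set.Ioo z' (ι y), f q :=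
      finsum_mem_le_of_subset hIoofin hsub f hnn
    have hIC2 : (∑ᶠ q ∈ Set.Ioo z' (ι y), f q) = 2 := by
      rw [← hICE]
    rw [hLC] at hL
    omega
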